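/- Over a densely ordered set, every partial strictly monotone function on a finite subset extends to a total strictly monotone function. Formally: if S ⊆ ℚ is finite and g : S → ℚ satisfies x < y → g x < g y for all x, y ∈ S, then there exists a strictly monotone f : ℚ → ℚ with f x = g x for all x ∈ S. -/

import Mathlib

lemma glue_strictMono {a : ℚ} {f h : ℚ → ℚ} (hf : StrictMono f) (hh : StrictMono h)
    (heq : f a ≤ h a) : StrictMono (fun x => if x ≤ a then f x else h x) := by
  intro x y hxy
  simp only
  by_cases hy : y ≤ a
  · rw [if_pos (hxy.le.trans hy), if_pos hy]; exact hf hxy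
  · push_neg at hy
    rw [if_neg (not_le.2 hy)]
    by_cases hx : x ≤ a
    · rw [if_pos hx]
      calc f x ≤ f a := hf.monotone hx
        _ ≤ h a := heq
        _ < h y := hh hy
    · rw [if_neg hx]; exact hh hxy

theorem stmt_4 (S : Finset ℚ) (g : ℚ → ℚ)
    (hg : ∀ x ∈ S, ∀ y ∈ S, x < y → g x < g y) :
    ∃ f : ℚ → ℚ, StrictMono f ∧ ∀ x ∈ S, f x = g x := by
  induction S using Finset.induction_on_max with
  | empty => exact ⟨id, strictMono_id, by simp⟩
  | insert a s ha ih =>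
    have hgs : ∀ x ∈ s, ∀ y ∈ s, x < y → g x < g y := fun x hx y hy =>
      hg x (Finset.mem_insert_of_mem hx) y (Finset.mem_insert_of_mem hy)
    obtain ⟨f, hf, hfs⟩ := ih hgs
    rcases s.eq_empty_or_nonempty with rfl | hs
    · refine ⟨fun x => x - a + g a, fun x y hxy => by dsimp; linarith, ?_⟩
      intro x hx
      simp only [Finset.mem_insert, Finset.notMem_empty, or_false] at hx
      subst hx; ring
    · set m := s.max' hs with hmdef
      have hm : m ∈ s := s.max'_mem hs
      have hma : m < a := ha m hm
      have hgm : g m < g a :=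
        hg m (Finset.mem_insert_of_mem hm) a (Finset.mem_insert_self a s) hma
      set c := (g a - g m) / (a - m) with hcdef
      have hc : 0 < c := div_pos (by linarith) (by linarith)
      have hh : StrictMono (fun x => g m + (x - m) * c) := fun x y hxy => by
        dsimp; nlinarith
      have heq : f m ≤ g m + (m - m) * c := by rw [hfs m hm]; simp
      refine ⟨fun x => if x ≤ m then f x else g m + (x - m) * c,
        glue_strictMono hf hh heq, ?_⟩
      intro x hx
      rcases Finset.mem_insert.1 hx with rfl | hx
      · dsimp only; rw [if_neg (not_le.2 hma)]
        have hne : x - m ≠ 0 := by linarith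
        rw [hcdef]
        field_simp
        ring
      · dsimp only; rw [if_pos (s.le_max' x hx)]; exact hfs x hx
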